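/- Let W_1,…,W_m be linear subspaces of V and let M = ∪_{i=1}^m W_i. If the set ∪_{i,j=1}^m (W_i + W_j) is transverse to the orbits of H, then the second moment is bi-Lipschitz on M; that is, there exist constants 0 < C₁ ≤ C₂ < ∞ such that C₁·d_σ(X,Y) ≤ ‖√(XᵀX) − √(YᵀY)‖ ≤ C₂·d_σ(X,Y) for all X,Y ∈ M. -/

import Mathlib

open scoped BigOperators
open Matrix

namespace GPR

variable {L : ℕ} {N R : Fin L → ℕ}

/-- The signal space: `L`-tuples of real `N ℓ × R ℓ` matrices. -/
abbrev V (N R : Fin L → ℕ) := ∀ ℓ : Fin L, Matrix (Fin (N ℓ)) (Fin (R ℓ)) ℝ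

/-- Frobenius norm of a tuple of matrices: `(Σ_ℓ Σ_{i,j} (X_ℓ)_{ij}²)^{1/2}`. -/
noncomputable def fnorm {m n : Fin L → ℕ} (X : ∀ ℓ : Fin L, Matrix (Fin (m ℓ)) (Fin (n ℓ)) ℝ) : ℝ :=
  Real.sqrt (∑ ℓ, ∑ i, ∑ j, (X ℓ i j) ^ 2)

/-- The group `H = ∏_ℓ O(N ℓ)`, as tuples of orthogonal matrices. -/
abbrev HGroup (N : Fin L → ℕ) := ∀ ℓ : Fin L, Matrix.orthogonalGroup (Fin (N ℓ)) ℝ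

/-- The action of `H` on `V`: `(Q · X)_ℓ = Q_ℓ X_ℓ`. -/
def act (Q : HGroup N) (X : V N R) : V N R :=
  fun ℓ => (Q ℓ : Matrix (Fin (N ℓ)) (Fin (N ℓ)) ℝ) * X ℓ

/-- `d_σ(X,Y) = min(‖X−Y‖, ‖X+Y‖)`. -/
noncomputable def dSigma (X Y : V N R) : ℝ := min (fnorm (X - Y)) (fnorm (X + Y))

/-- `d_H(X,Y) = min_{Q ∈ H} ‖X − Q·Y‖`. -/
noncomputable def dH (X Y : V N R) : ℝ := ⨅ Q : HGroup N, fnorm (X - act Q Y)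

/-- The positive semidefinite square root `√(XᵀX)` of the Gram matrix of a single matrix. -/
noncomputable def gramSqrt {n d : ℕ} (X : Matrix (Fin n) (Fin d) ℝ) : Matrix (Fin d) (Fin d) ℝ :=
  (Matrix.posSemidef_conjTranspose_mul_self X).1.eigenvectorUnitary.1 *
    Matrix.diagonal (Real.sqrt ∘ (Matrix.posSemidef_conjTranspose_mul_self X).1.eigenvalues) *
    (star (Matrix.posSemidef_conjTranspose_mul_self X).1.eigenvectorUnitary : Matrix (Fin d) (Fin d) ℝ)

/-- The tuple `√(XᵀX) = (√(X₁ᵀX₁), …, √(X_LᵀX_L))`. -/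
noncomputable def sqrtGram (X : V N R) : ∀ ℓ : Fin L, Matrix (Fin (R ℓ)) (Fin (R ℓ)) ℝ :=
  fun ℓ => gramSqrt (X ℓ)

/-- The second moment: tuple of Gram matrices `XᵀX = (X₁ᵀX₁, …, X_LᵀX_L)`. -/
def gram (X : V N R) : ∀ ℓ : Fin L, Matrix (Fin (R ℓ)) (Fin (R ℓ)) ℝ :=
  fun ℓ => (X ℓ)ᵀ * X ℓ

/-- A set `S ⊆ V` is transverse to the orbits of `H` if whenever `X ∈ S` and `Q·X ∈ S`,
one has `Q·X = X` or `Q·X = −X`. -/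
def Transverse (S : Set (V N R)) : Prop :=
  ∀ X ∈ S, ∀ Q : HGroup N, act Q X ∈ S → act Q X = X ∨ act Q X = -X


set_option linter.unusedSectionVars false

section MatrixLemmas


variable {n d : Type*} [Fintype n] [Fintype d] [DecidableEq n] [DecidableEq d]

lemma real_conjTranspose (A : Matrix n d ℝ) : Aᴴ = Aᵀ := by
  ext i j; simp [Matrix.conjTranspose_apply]

/-- Frobenius inner product. -/
def frobInner (M P : Matrix n d ℝ) : ℝ := ∑ a, ∑ c, M a c * P a c

/-- Frobenius squared norm. -/
def mnormsq (M : Matrix n d ℝ) : ℝ := ∑ a, ∑ c, M a c ^ 2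

lemma mnormsq_eq_frobInner (M : Matrix n d ℝ) : mnormsq M = frobInner M M := by
  simp [mnormsq, frobInner, sq]

lemma mnormsq_nonneg (M : Matrix n d ℝ) : 0 ≤ mnormsq M := by
  apply Finset.sum_nonneg; intro a _; apply Finset.sum_nonneg; intro c _; positivity

lemma frobInner_comm (M P : Matrix n d ℝ) : frobInner M P = frobInner P M := by
  simp [frobInner, mul_comm]

lemma frobInner_sub_left (M N P : Matrix n d ℝ) :
    frobInner (M - N) P = frobInner M P - frobInner N P := by
  simp [frobInner, Matrix.sub_apply, sub_mul, Finset.sum_sub_distrib]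

lemma frobInner_sub_right (M N P : Matrix n d ℝ) :
    frobInner P (M - N) = frobInner P M - frobInner P N := by
  rw [frobInner_comm, frobInner_sub_left, frobInner_comm M P, frobInner_comm N P]

lemma mnormsq_sub (M P : Matrix n d ℝ) :
    mnormsq (M - P) = frobInner M M - 2 * frobInner M P + frobInner P P := by
  rw [mnormsq_eq_frobInner, frobInner_sub_left, frobInner_sub_right, frobInner_sub_right,
    frobInner_comm P M]; ring

lemma frobInner_sum_left {ι : Type*} [Fintype ι]
    (f : ι → Matrix n d ℝ) (P : Matrix n d ℝ) :
    frobInner (∑ i, f i) P = ∑ i, frobInner (f i) P := by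
  simp only [frobInner, Matrix.sum_apply, Finset.sum_mul]
  refine (Finset.sum_congr rfl fun a _ => Finset.sum_comm).trans ?_
  exact Finset.sum_comm

lemma frobInner_sum_right {ι : Type*} [Fintype ι]
    (f : ι → Matrix n d ℝ) (P : Matrix n d ℝ) :
    frobInner P (∑ i, f i) = ∑ i, frobInner P (f i) := by
  rw [frobInner_comm, frobInner_sum_left]
  exact Finset.sum_congr rfl fun i _ => frobInner_comm _ _

lemma frobInner_sum_sum {ι κ : Type*} [Fintype ι] [Fintype κ]
    (f : ι → Matrix n d ℝ) (g : κ → Matrix n d ℝ) :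
    frobInner (∑ i, f i) (∑ j, g j) = ∑ i, ∑ j, frobInner (f i) (g j) := by
  rw [frobInner_sum_left]
  exact Finset.sum_congr rfl fun i _ => frobInner_sum_right _ _

lemma frobInner_smul_left (t : ℝ) (M P : Matrix n d ℝ) :
    frobInner (t • M) P = t * frobInner M P := by
  simp [frobInner, Matrix.smul_apply, Finset.mul_sum, mul_assoc]

lemma frobInner_smul_right (t : ℝ) (M P : Matrix n d ℝ) :
    frobInner P (t • M) = t * frobInner P M := by
  rw [frobInner_comm, frobInner_smul_left, frobInner_comm]

lemma frobInner_vecMulVec (u : n → ℝ) (v : d → ℝ) (x : n → ℝ) (y : d → ℝ) :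
    frobInner (vecMulVec u v) (vecMulVec x y) = (u ⬝ᵥ x) * (v ⬝ᵥ y) := by
  simp only [frobInner, vecMulVec_apply, dotProduct, Finset.sum_mul_sum]
  refine Finset.sum_congr rfl fun a _ => Finset.sum_congr rfl fun c _ => by ring

lemma vecMulVec_mul_vecMulVec (u : n → ℝ) (v : d → ℝ) (x : d → ℝ) (y : n → ℝ) :
    vecMulVec u v * vecMulVec x y = (v ⬝ᵥ x) • vecMulVec u y := by
  ext a b
  simp [Matrix.mul_apply, vecMulVec_apply, dotProduct, Finset.mul_sum, Finset.sum_mul]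
  exact Finset.sum_congr rfl fun c _ => by ring

lemma mul_vecMulVec {m : Type*} (M : Matrix n d ℝ) (x : d → ℝ) (y : m → ℝ) :
    M * vecMulVec x y = vecMulVec (M *ᵥ x) y := by
  ext a b
  simp only [Matrix.mul_apply, vecMulVec_apply, Matrix.mulVec, dotProduct, Finset.sum_mul]
  exact Finset.sum_congr rfl fun c _ => by ring

lemma transpose_vecMulVec (u : n → ℝ) (v : d → ℝ) :
    (vecMulVec u v)ᵀ = vecMulVec v u := by
  ext a b; simp [vecMulVec_apply, mul_comm]

lemma vecMulVec_mulVec (u : n → ℝ) (v : d → ℝ) (x : d → ℝ) :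
    vecMulVec u v *ᵥ x = (v ⬝ᵥ x) • u := by
  ext a
  simp only [Matrix.mulVec, vecMulVec_apply, dotProduct, Pi.smul_apply, smul_eq_mul]
  rw [Finset.sum_mul]
  exact Finset.sum_congr rfl fun c _ => by ring

lemma sum_mulVec' {ι : Type*} [Fintype ι] (A : ι → Matrix n d ℝ) (x : d → ℝ) :
    (∑ k, A k) *ᵥ x = ∑ k, A k *ᵥ x := by
  ext a
  simp [Matrix.mulVec, dotProduct, Matrix.sum_apply, Finset.sum_apply, Finset.sum_mul]
  rw [Finset.sum_comm]

/-- completeness of an orthonormal family of full cardinality (square case). -/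
lemma sum_vecMulVec_self_eq_one {v : d → d → ℝ}
    (hv : ∀ i j, v i ⬝ᵥ v j = if i = j then (1:ℝ) else 0) :
    ∑ i, vecMulVec (v i) (v i) = (1 : Matrix d d ℝ) := by
  have h1 : (Matrix.of fun a i => v i a)ᵀ * (Matrix.of fun a i => v i a) = 1 := by
    ext i j
    simpa [Matrix.mul_apply, Matrix.transpose_apply, Matrix.one_apply, dotProduct] using hv i j
  have h2 := (mul_eq_one_comm).mp h1
  ext a c
  simpa [Matrix.mul_apply, Matrix.sum_apply, vecMulVec_apply, Matrix.transpose_apply,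
    Matrix.one_apply] using congrFun (congrFun h2 a) c


/-! ### SVD-type decomposition -/

section SVD

variable (A : Matrix n d ℝ)

/-- identity map into `EuclideanSpace`. -/
def toEuc (x : n → ℝ) : EuclideanSpace ℝ n := WithLp.toLp 2 x

/-- identity map out of `EuclideanSpace`. -/
def ofEuc (x : EuclideanSpace ℝ n) : n → ℝ := x.ofLp

@[simp] lemma ofEuc_toEuc (x : n → ℝ) : ofEuc (toEuc x) = x := rfl

@[simp] lemma toEuc_ofEuc (x : EuclideanSpace ℝ n) : toEuc (ofEuc x) = x := rfl

lemma euc_inner_eq_dot (x y : EuclideanSpace ℝ d) :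
    (inner ℝ x y : ℝ) = ofEuc x ⬝ᵥ ofEuc y := by
  simp [PiLp.inner_apply, dotProduct, ofEuc, mul_comm]

/-- Core construction: given an orthonormal eigenbasis of `AᵀA`, produce left singular
vectors. -/
lemma svd_core (σ : d → ℝ) (v : d → d → ℝ) (hσ : ∀ i, 0 ≤ σ i)
    (hv : ∀ i j, v i ⬝ᵥ v j = if i = j then (1:ℝ) else 0)
    (heig : ∀ i, (Aᴴ * A) *ᵥ v i = (σ i ^ 2) • v i) :
    ∃ u : d → n → ℝ,
      (∀ i j, u i ⬝ᵥ u j = if i = j ∧ σ i ≠ 0 then (1:ℝ) else 0) ∧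
      (∀ i, A *ᵥ v i = σ i • u i) ∧
      A = ∑ i, σ i • vecMulVec (u i) (v i) := by
  classical
  have hdot : ∀ i j, (A *ᵥ v i) ⬝ᵥ (A *ᵥ v j) = if i = j then σ i ^ 2 else 0 := by
    intro i j
    have h1 : v i ⬝ᵥ ((Aᴴ * A) *ᵥ v j) = (A *ᵥ v i) ⬝ᵥ (A *ᵥ v j) := by
      rw [real_conjTranspose, ← Matrix.mulVec_mulVec, Matrix.dotProduct_mulVec,
        Matrix.vecMul_transpose]
    rw [← h1, heig j, dotProduct_smul, smul_eq_mul, hv i j]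
    by_cases h : i = j
    · subst h; simp
    · simp [h, Ne.symm h]
  refine ⟨fun i => if h : σ i = 0 then 0 else (σ i)⁻¹ • (A *ᵥ v i), ?_, ?_, ?_⟩
  · intro i j
    by_cases hi : σ i = 0
    · simp [hi]
    by_cases hj : σ j = 0
    · have hij : i ≠ j := by rintro rfl; exact hi hj
      simp [hi, hj, hij]
    · simp only [dif_neg hi, dif_neg hj]
      rw [smul_dotProduct, dotProduct_smul, hdot i j]
      by_cases h : i = j
      · subst h; simp [hi]; field_simp
      · simp [h, hi]
  · intro i
    by_cases hi : σ i = 0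
    · have h0 : (A *ᵥ v i) ⬝ᵥ (A *ᵥ v i) = 0 := by rw [hdot i i]; simp [hi]
      have := dotProduct_self_eq_zero.mp h0
      simp [hi, this]
    · simp only [dif_neg hi]
      rw [smul_smul]
      simp [hi]
  · -- A = ∑ σ u vᵀ
    have hone := sum_vecMulVec_self_eq_one hv
    conv_lhs => rw [show A = A * ∑ i, vecMulVec (v i) (v i) by rw [hone, Matrix.mul_one]]
    rw [Matrix.mul_sum]
    refine Finset.sum_congr rfl fun i _ => ?_
    rw [mul_vecMulVec]
    by_cases hi : σ i = 0
    · have h0 : (A *ᵥ v i) ⬝ᵥ (A *ᵥ v i) = 0 := by rw [hdot i i]; simp [hi]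
      have hz := dotProduct_self_eq_zero.mp h0
      ext a b; simp [hz, hi, vecMulVec_apply]
    · simp only [dif_neg hi]
      ext a b
      simp only [vecMulVec_apply, Pi.smul_apply, smul_eq_mul, Matrix.smul_apply]
      field_simp

/-- The eigen-data of the Gram matrix `AᵀA`. -/
noncomputable def gramEig (G : Matrix d d ℝ) (hG : G.PosSemidef) :
    (d → ℝ) × (d → d → ℝ) :=
  (fun i => Real.sqrt (hG.1.eigenvalues i), fun i => (hG.1.eigenvectorBasis i : d → ℝ))

lemma gramEig_spec (G : Matrix d d ℝ) (hG : G.PosSemidef) :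
    (∀ i, 0 ≤ (gramEig G hG).1 i) ∧
    (∀ i j, (gramEig G hG).2 i ⬝ᵥ (gramEig G hG).2 j = if i = j then (1:ℝ) else 0) ∧
    (∀ i, G *ᵥ (gramEig G hG).2 i = ((gramEig G hG).1 i ^ 2) • (gramEig G hG).2 i) := by
  refine ⟨fun i => Real.sqrt_nonneg _, fun i j => ?_, fun i => ?_⟩
  · have h := orthonormal_iff_ite.mp (hG.1.eigenvectorBasis).orthonormal i j
    rw [euc_inner_eq_dot] at h
    simpa [gramEig, ofEuc] using h
  · have h := hG.1.mulVec_eigenvectorBasis i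
    have hnn := hG.eigenvalues_nonneg i
    have : Real.sqrt (hG.1.eigenvalues i) ^ 2 = hG.1.eigenvalues i := Real.sq_sqrt hnn
    simpa [gramEig, this] using h

end SVD


/-! ### identification of the psd square root, and the Araki–Yamagami inequality -/

section Abs
variable (A B : Matrix n d ℝ)

/-- `|A| = √(AᴴA)`. -/
noncomputable def absm : Matrix d d ℝ :=
  (Matrix.posSemidef_conjTranspose_mul_self A).1.eigenvectorUnitary.1 *
    Matrix.diagonal (Real.sqrt ∘ (Matrix.posSemidef_conjTranspose_mul_self A).1.eigenvalues) *
    (star (Matrix.posSemidef_conjTranspose_mul_self A).1.eigenvectorUnitary : Matrix d d ℝ)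

open MatrixOrder in
lemma absm_eq_cfc : absm A = CFC.sqrt (Aᴴ * A) := by
  rw [CFC.sqrt_eq_cfc, cfc_nnreal_eq_real _ (Aᴴ * A) (posSemidef_conjTranspose_mul_self A).nonneg,
    (posSemidef_conjTranspose_mul_self A).1.cfc_eq]
  simp only [IsHermitian.cfc, Unitary.conjStarAlgAut_apply, absm]
  congr 3
  funext i
  simp only [Function.comp_apply, Real.coe_sqrt, Real.coe_toNNReal']
  rw [max_eq_left ((posSemidef_conjTranspose_mul_self A).eigenvalues_nonneg i)]
  rfl

open MatrixOrder in
lemma absm_posSemidef : (absm A).PosSemidef := by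
  rw [absm_eq_cfc]; exact (CFC.sqrt_nonneg _).posSemidef

open MatrixOrder in
lemma absm_mul_self : absm A * absm A = Aᴴ * A := by
  rw [absm_eq_cfc]; exact CFC.sqrt_mul_sqrt_self _ (posSemidef_conjTranspose_mul_self A).nonneg

open MatrixOrder in
lemma absm_unique {P : Matrix d d ℝ} (hP : P.PosSemidef) (h : P ^ 2 = Aᴴ * A) : P = absm A := by
  rw [absm_eq_cfc]; exact (CFC.sqrt_unique (by rw [← h, pow_two]) hP.nonneg).symm

lemma smul_vecMulVec (t : ℝ) (x : n → ℝ) (y : d → ℝ) :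
    vecMulVec (t • x) y = t • vecMulVec x y := by
  ext a b; simp [vecMulVec_apply, mul_assoc]

lemma gram_eq_sum (σ : d → ℝ) (v : d → d → ℝ)
    (hv : ∀ i j, v i ⬝ᵥ v j = if i = j then (1:ℝ) else 0)
    (heig : ∀ i, (Aᴴ * A) *ᵥ v i = (σ i ^ 2) • v i) :
    Aᴴ * A = ∑ i, (σ i ^ 2) • vecMulVec (v i) (v i) := by
  conv_lhs => rw [show Aᴴ * A = (Aᴴ * A) * ∑ i, vecMulVec (v i) (v i) by
    rw [sum_vecMulVec_self_eq_one hv, Matrix.mul_one]]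
  rw [Matrix.mul_sum]
  refine Finset.sum_congr rfl fun i _ => ?_
  rw [mul_vecMulVec, heig i, smul_vecMulVec]

lemma absm_eq_sum (σ : d → ℝ) (v : d → d → ℝ) (hσ : ∀ i, 0 ≤ σ i)
    (hv : ∀ i j, v i ⬝ᵥ v j = if i = j then (1:ℝ) else 0)
    (heig : ∀ i, (Aᴴ * A) *ᵥ v i = (σ i ^ 2) • v i) :
    absm A = ∑ i, σ i • vecMulVec (v i) (v i) := by
  set P : Matrix d d ℝ := ∑ i, σ i • vecMulVec (v i) (v i) with hP
  have hpsd : P.PosSemidef := by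
    have : P = (Matrix.of fun i c => Real.sqrt (σ i) * v i c)ᴴ *
        (Matrix.of fun i c => Real.sqrt (σ i) * v i c) := by
      ext a c
      simp only [hP, Matrix.sum_apply, Matrix.smul_apply, vecMulVec_apply, smul_eq_mul,
        Matrix.mul_apply, Matrix.conjTranspose_apply, Matrix.of_apply, star_trivial]
      refine Finset.sum_congr rfl fun i _ => ?_
      have h : Real.sqrt (σ i) * Real.sqrt (σ i) = σ i := Real.mul_self_sqrt (hσ i)
      linear_combination (-(v i a * v i c)) * h
    rw [this]
    exact Matrix.posSemidef_conjTranspose_mul_self _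
  have hsq : P ^ 2 = Aᴴ * A := by
    rw [pow_two, hP, Matrix.sum_mul]
    rw [gram_eq_sum A σ v hv heig]
    refine Finset.sum_congr rfl fun i _ => ?_
    rw [Matrix.mul_sum]
    have hterm : ∀ j, (σ i • vecMulVec (v i) (v i)) * (σ j • vecMulVec (v j) (v j)) =
        (if i = j then (σ i ^2 ) • vecMulVec (v i) (v j) else 0) := by
      intro j
      rw [Matrix.smul_mul, Matrix.mul_smul, vecMulVec_mul_vecMulVec, hv i j]
      by_cases h : i = j
      · subst h; simp [pow_two, smul_smul, mul_comm]
      · simp [h]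
    simp only [hterm]
    simp
  exact (absm_unique A hpsd hsq).symm

lemma frobInner_sum_smul_vecMulVec {ι : Type*} [Fintype ι] (a b : ι → ℝ)
    (x y : ι → n → ℝ) (p q : ι → d → ℝ) :
    frobInner (∑ i, a i • vecMulVec (x i) (p i)) (∑ j, b j • vecMulVec (y j) (q j)) =
      ∑ i, ∑ j, a i * b j * ((x i ⬝ᵥ y j) * (p i ⬝ᵥ q j)) := by
  rw [frobInner_sum_sum]
  refine Finset.sum_congr rfl fun i _ => Finset.sum_congr rfl fun j _ => ?_
  rw [frobInner_smul_left, frobInner_smul_right, frobInner_vecMulVec]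
  ring

/-- Araki–Yamagami inequality, Frobenius version. -/
theorem absm_sub_mnormsq_le : mnormsq (absm A - absm B) ≤ 2 * mnormsq (A - B) := by
  classical
  obtain ⟨hσ, hv, heigA⟩ := gramEig_spec (Aᴴ * A) (Matrix.posSemidef_conjTranspose_mul_self A)
  obtain ⟨hτ, hw, heigB⟩ := gramEig_spec (Bᴴ * B) (Matrix.posSemidef_conjTranspose_mul_self B)
  set σ := (gramEig (Aᴴ * A) (Matrix.posSemidef_conjTranspose_mul_self A)).1
  set v := (gramEig (Aᴴ * A) (Matrix.posSemidef_conjTranspose_mul_self A)).2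
  set τ := (gramEig (Bᴴ * B) (Matrix.posSemidef_conjTranspose_mul_self B)).1
  set w := (gramEig (Bᴴ * B) (Matrix.posSemidef_conjTranspose_mul_self B)).2
  obtain ⟨u, hu, -, hAe⟩ := svd_core A σ v hσ hv heigA
  obtain ⟨z, hz, -, hBe⟩ := svd_core B τ w hτ hw heigB
  have hPA : absm A = ∑ i, σ i • vecMulVec (v i) (v i) := absm_eq_sum A σ v hσ hv heigA
  have hPB : absm B = ∑ i, τ i • vecMulVec (w i) (w i) := absm_eq_sum B τ w hτ hw heigB
  have expand := fun (a b : d → ℝ) (x y : d → n → ℝ) (p q : d → d → ℝ) =>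
    frobInner_sum_smul_vecMulVec a b x y p q
  have expand' := fun (a b : d → ℝ) (p q : d → d → ℝ) =>
    frobInner_sum_smul_vecMulVec (n := d) (d := d) a b p q p q
  have expand'' := fun (a b : d → ℝ) (p q : d → n → ℝ) =>
    frobInner_sum_smul_vecMulVec (n := n) (d := n) a b p q p q
  have hAB : frobInner A B = ∑ i, ∑ j, σ i * τ j * ((u i ⬝ᵥ z j) * (v i ⬝ᵥ w j)) := by
    rw [hAe, hBe, expand]
  have hAA : frobInner A A = ∑ i, ∑ j, σ i * σ j * ((u i ⬝ᵥ u j) * (v i ⬝ᵥ v j)) := by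
    rw [hAe, expand]
  have hBB : frobInner B B = ∑ i, ∑ j, τ i * τ j * ((z i ⬝ᵥ z j) * (w i ⬝ᵥ w j)) := by
    rw [hBe, expand]
  -- diagonal identities
  have diagA : ∀ i j, σ i * σ j * ((u i ⬝ᵥ u j) * (v i ⬝ᵥ v j))
      = σ i * σ j * ((v i ⬝ᵥ v j) * (v i ⬝ᵥ v j)) := by
    intro i j
    rw [hu, hv]
    by_cases h : i = j
    · subst h
      by_cases h0 : σ i = 0 <;> simp [h0]
    · simp [h]
  have diagA' : ∀ i j, σ i * σ j * ((u i ⬝ᵥ u j) * (u i ⬝ᵥ u j))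
      = σ i * σ j * ((u i ⬝ᵥ u j) * (v i ⬝ᵥ v j)) := by
    intro i j
    rw [hu, hv]
    by_cases h : i = j
    · subst h
      by_cases h0 : σ i = 0 <;> simp [h0]
    · simp [h]
  have diagB : ∀ i j, τ i * τ j * ((z i ⬝ᵥ z j) * (w i ⬝ᵥ w j))
      = τ i * τ j * ((w i ⬝ᵥ w j) * (w i ⬝ᵥ w j)) := by
    intro i j
    rw [hz, hw]
    by_cases h : i = j
    · subst h
      by_cases h0 : τ i = 0 <;> simp [h0]
    · simp [h]
  have diagB' : ∀ i j, τ i * τ j * ((z i ⬝ᵥ z j) * (z i ⬝ᵥ z j))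
      = τ i * τ j * ((z i ⬝ᵥ z j) * (w i ⬝ᵥ w j)) := by
    intro i j
    rw [hz, hw]
    by_cases h : i = j
    · subst h
      by_cases h0 : τ i = 0 <;> simp [h0]
    · simp [h]
  have hPP : frobInner (absm A) (absm A) = frobInner A A := by
    rw [hPA, expand', hAA]
    exact Finset.sum_congr rfl fun i _ => Finset.sum_congr rfl fun j _ => (diagA i j).symm
  have hQQ : frobInner (absm B) (absm B) = frobInner B B := by
    rw [hPB, expand', hBB]
    exact Finset.sum_congr rfl fun i _ => Finset.sum_congr rfl fun j _ => (diagB i j).symm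
  have hPQ : frobInner (absm A) (absm B) =
      ∑ i, ∑ j, σ i * τ j * ((v i ⬝ᵥ w j) * (v i ⬝ᵥ w j)) := by
    rw [hPA, hPB, expand']
  -- the primed (left singular vector) Gram matrices
  set PA' : Matrix n n ℝ := ∑ i, σ i • vecMulVec (u i) (u i) with hPA'
  set PB' : Matrix n n ℝ := ∑ i, τ i • vecMulVec (z i) (z i) with hPB'
  have hP'P' : frobInner PA' PA' = frobInner A A := by
    rw [hPA', expand'', hAA]
    refine Finset.sum_congr rfl fun i _ => Finset.sum_congr rfl fun j _ => ?_
    rw [diagA']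
  have hQ'Q' : frobInner PB' PB' = frobInner B B := by
    rw [hPB', expand'', hBB]
    refine Finset.sum_congr rfl fun i _ => Finset.sum_congr rfl fun j _ => ?_
    rw [diagB']
  have hP'Q' : frobInner PA' PB' =
      ∑ i, ∑ j, σ i * τ j * ((u i ⬝ᵥ z j) * (u i ⬝ᵥ z j)) := by
    rw [hPA', hPB', expand'']
  -- two nonnegative quantities
  have h1 : 0 ≤ frobInner A A - 2 * frobInner PA' PB' + frobInner B B := by
    have := mnormsq_nonneg (PA' - PB')
    rw [mnormsq_sub, hP'P', hQ'Q'] at this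
    linarith
  have h2 : 0 ≤ frobInner (absm A) (absm B) - 2 * frobInner A B + frobInner PA' PB' := by
    have hsplit : ∑ i, ∑ j, σ i * τ j * ((v i ⬝ᵥ w j) - (u i ⬝ᵥ z j)) ^ 2
        = (∑ i, ∑ j, σ i * τ j * ((v i ⬝ᵥ w j) * (v i ⬝ᵥ w j)))
          - 2 * (∑ i, ∑ j, σ i * τ j * ((u i ⬝ᵥ z j) * (v i ⬝ᵥ w j)))
          + (∑ i, ∑ j, σ i * τ j * ((u i ⬝ᵥ z j) * (u i ⬝ᵥ z j))) := by
      simp only [Finset.mul_sum]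
      rw [← Finset.sum_sub_distrib, ← Finset.sum_add_distrib]
      refine Finset.sum_congr rfl fun i _ => ?_
      rw [← Finset.sum_sub_distrib, ← Finset.sum_add_distrib]
      refine Finset.sum_congr rfl fun j _ => ?_
      ring
    have hnn : 0 ≤ ∑ i, ∑ j, σ i * τ j * ((v i ⬝ᵥ w j) - (u i ⬝ᵥ z j)) ^ 2 := by
      refine Finset.sum_nonneg fun i _ => Finset.sum_nonneg fun j _ => ?_
      have := mul_nonneg (hσ i) (hτ j)
      positivity
    rw [hsplit] at hnn
    rw [hPQ, hAB, hP'Q']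
    linarith
  -- conclude
  rw [mnormsq_sub, mnormsq_sub, hPP, hQQ]
  linarith
end Abs


/-! ### equal Gram matrices implies orthogonal equivalence -/

section GramOrth

lemma dot_ite_orthonormal {u : d → n → ℝ} {σ : d → ℝ}
    (hu : ∀ i j, u i ⬝ᵥ u j = if i = j ∧ σ i ≠ 0 then (1:ℝ) else 0) :
    Orthonormal ℝ (fun i : {i : d // σ i ≠ 0} => toEuc (u i)) := by
  rw [orthonormal_iff_ite]
  intro i j
  rw [euc_inner_eq_dot]
  have := hu i j
  by_cases h : (i : d) = j
  · have hj : (i : {i : d // σ i ≠ 0}) = j := Subtype.ext h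
    simp [hj, hu, j.2]
  · have hij : (i : {i : d // σ i ≠ 0}) ≠ j := fun hh => h (congrArg Subtype.val hh)
    simp [hij, hu, h]

lemma onb_dot (b : OrthonormalBasis n ℝ (EuclideanSpace ℝ n)) :
    ∀ k l, ofEuc (b k) ⬝ᵥ ofEuc (b l) = if k = l then (1:ℝ) else 0 := by
  intro k l
  have := orthonormal_iff_ite.mp b.orthonormal k l
  rwa [euc_inner_eq_dot] at this

set_option maxHeartbeats 2000000 in
lemma exists_orthogonal_map (σ : d → ℝ) (u z : d → n → ℝ)
    (hu : ∀ i j, u i ⬝ᵥ u j = if i = j ∧ σ i ≠ 0 then (1:ℝ) else 0)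
    (hz : ∀ i j, z i ⬝ᵥ z j = if i = j ∧ σ i ≠ 0 then (1:ℝ) else 0) :
    ∃ Q : Matrix n n ℝ, Q ∈ Matrix.orthogonalGroup n ℝ ∧
      ∀ i, σ i ≠ 0 → Q *ᵥ u i = z i := by
  classical
  set st := {i : d // σ i ≠ 0}
  have hou : Orthonormal ℝ (fun i : st => toEuc (u i)) := dot_ite_orthonormal hu
  have hoz : Orthonormal ℝ (fun i : st => toEuc (z i)) := dot_ite_orthonormal hz
  have hcard : Fintype.card st ≤ Fintype.card n := by
    simpa [finrank_euclideanSpace] using hou.linearIndependent.fintype_card_le_finrank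
  obtain ⟨e⟩ : Nonempty (st ↪ n) := Function.Embedding.nonempty_of_card_le hcard
  -- extend both families to orthonormal bases
  have hext : ∀ (f : d → n → ℝ),
      (Orthonormal ℝ (fun i : st => toEuc (f i))) →
      ∃ b : OrthonormalBasis n ℝ (EuclideanSpace ℝ n), ∀ i : st, b (e i) = f i := by
    intro f hof
    set ff : n → EuclideanSpace ℝ n :=
      Function.extend (⇑e) (fun i : st => toEuc (f i)) 0 with hff
    have hffe : ∀ i : st, ff (e i) = toEuc (f i) := fun i => e.injective.extend_apply _ _ i
    have hres : Orthonormal ℝ ((Set.range ⇑e).restrict ff) := by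
      rw [orthonormal_iff_ite]
      rintro ⟨a, i, rfl⟩ ⟨b, j, rfl⟩
      show inner ℝ (ff (e i)) (ff (e j)) = _
      have h2 : inner (𝕜 := ℝ) (ff (e i)) (ff (e j)) = if i = j then (1:ℝ) else 0 := by
        rw [hffe i, hffe j]; exact orthonormal_iff_ite.mp hof i j
      rw [h2]
      by_cases h : i = j
      · simp [h]
      · have h1 : (⟨e i, ⟨i, rfl⟩⟩ : Set.range ⇑e) ≠ ⟨e j, ⟨j, rfl⟩⟩ := by
          intro hh
          exact h (e.injective (congrArg Subtype.val hh))
        simp [h, h1]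
    obtain ⟨b, hb⟩ := hres.exists_orthonormalBasis_extension_of_card_eq
      (finrank_euclideanSpace)
    exact ⟨b, fun i => by rw [hb (e i) ⟨i, rfl⟩, hffe]; rfl⟩
  obtain ⟨bu, hbu⟩ := hext u hou
  obtain ⟨bz, hbz⟩ := hext z hoz
  set Q : Matrix n n ℝ := ∑ k, vecMulVec (ofEuc (bz k)) (ofEuc (bu k)) with hQ
  have hQQ : Q * Qᵀ = 1 := by
    rw [hQ, Matrix.transpose_sum]
    simp only [transpose_vecMulVec]
    rw [Matrix.sum_mul]
    have : ∀ k, (vecMulVec (ofEuc (bz k)) (ofEuc (bu k)) *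
        ∑ l, vecMulVec (ofEuc (bu l)) (ofEuc (bz l))) = vecMulVec (ofEuc (bz k)) (ofEuc (bz k)) := by
      intro k
      rw [Matrix.mul_sum]
      have hterm : ∀ l, vecMulVec (ofEuc (bz k)) (ofEuc (bu k)) *
          vecMulVec (ofEuc (bu l)) (ofEuc (bz l))
          = if k = l then vecMulVec (ofEuc (bz k)) (ofEuc (bz l)) else 0 := by
        intro l
        rw [vecMulVec_mul_vecMulVec, onb_dot bu k l]
        by_cases h : k = l <;> simp [h]
      simp only [hterm]
      simp
    simp only [this]
    exact sum_vecMulVec_self_eq_one (onb_dot bz)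
  refine ⟨Q, ?_, ?_⟩
  · rw [Matrix.mem_orthogonalGroup_iff]
    exact hQQ
  · intro i hi
    have hui : u i = ofEuc (bu (e ⟨i, hi⟩)) := (hbu ⟨i, hi⟩).symm
    rw [hui, hQ, sum_mulVec']
    have hterm : ∀ k, vecMulVec (ofEuc (bz k)) (ofEuc (bu k)) *ᵥ ofEuc (bu (e ⟨i, hi⟩))
        = if k = e ⟨i, hi⟩ then ofEuc (bz k) else 0 := by
      intro k
      rw [vecMulVec_mulVec, onb_dot bu k (e ⟨i, hi⟩)]
      by_cases h : k = e ⟨i, hi⟩ <;> simp [h]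
    simp only [hterm]
    rw [Finset.sum_ite_eq' Finset.univ (e ⟨i, hi⟩) (fun k => ofEuc (bz k))]
    have : ofEuc (bz (e ⟨i, hi⟩)) = z i := hbz ⟨i, hi⟩
    simp [this]

/-- Equal Gram matrices implies orthogonally equivalent. -/
theorem exists_orthogonal_of_gram_eq (A B : Matrix n d ℝ) (h : Aᴴ * A = Bᴴ * B) :
    ∃ Q : Matrix n n ℝ, Q ∈ Matrix.orthogonalGroup n ℝ ∧ Q * A = B := by
  classical
  obtain ⟨hσ, hv, heigA⟩ := gramEig_spec (Aᴴ * A) (Matrix.posSemidef_conjTranspose_mul_self A)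
  set σ := (gramEig (Aᴴ * A) (Matrix.posSemidef_conjTranspose_mul_self A)).1
  set v := (gramEig (Aᴴ * A) (Matrix.posSemidef_conjTranspose_mul_self A)).2
  have heigB : ∀ i, (Bᴴ * B) *ᵥ v i = (σ i ^ 2) • v i := by rw [← h]; exact heigA
  obtain ⟨u, hu, hAv, hAe⟩ := svd_core A σ v hσ hv heigA
  obtain ⟨z, hz, hBv, hBe⟩ := svd_core B σ v hσ hv heigB
  obtain ⟨Q, hQmem, hQmap⟩ := exists_orthogonal_map σ u z hu hz
  refine ⟨Q, hQmem, ?_⟩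
  rw [hAe, hBe, Matrix.mul_sum]
  refine Finset.sum_congr rfl fun i _ => ?_
  rw [Matrix.mul_smul, mul_vecMulVec]
  by_cases h0 : σ i = 0
  · simp [h0]
  · rw [hQmap i h0]

end GramOrth


/-! ### extra single-matrix lemmas -/

section MoreMatrix
variable {e : Type*} [Fintype e]

lemma mnormsq_mul_le (M : Matrix n d ℝ) (P : Matrix d e ℝ) :
    mnormsq (M * P) ≤ mnormsq M * mnormsq P := by
  unfold mnormsq
  calc ∑ i, ∑ j, (M * P) i j ^ 2
      ≤ ∑ i, ∑ j, (∑ k, M i k ^ 2) * (∑ k, P k j ^ 2) := by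
        refine Finset.sum_le_sum fun i _ => Finset.sum_le_sum fun j _ => ?_
        rw [Matrix.mul_apply]
        exact Finset.sum_mul_sq_le_sq_mul_sq Finset.univ _ _
    _ = (∑ i, ∑ k, M i k ^ 2) * (∑ j, ∑ k, P k j ^ 2) := by
        rw [Finset.sum_mul_sum]
    _ = (∑ i, ∑ k, M i k ^ 2) * (∑ k, ∑ j, P k j ^ 2) := by
        congr 1
        exact Finset.sum_comm

lemma mnormsq_absm (A : Matrix n d ℝ) : mnormsq (absm A) = mnormsq A := by
  have hsym : (absm A)ᵀ = absm A := by
    rw [← real_conjTranspose]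
    exact (absm_posSemidef A).1
  have hmul : absm A * absm A = Aᴴ * A :=
    absm_mul_self A
  have happ : ∀ i j, absm A i j = absm A j i := by
    intro i j
    have := congrFun (congrFun hsym j) i
    rwa [Matrix.transpose_apply] at this
  have h1 : mnormsq (absm A) = Matrix.trace (absm A * absm A) := by
    unfold mnormsq Matrix.trace Matrix.diag
    refine (Finset.sum_comm).trans (Finset.sum_congr rfl fun j _ => ?_)
    rw [Matrix.mul_apply]
    refine Finset.sum_congr rfl fun i _ => ?_
    rw [sq, happ i j]
  have h2 : Matrix.trace (Aᴴ * A) = mnormsq A := by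
    unfold mnormsq Matrix.trace Matrix.diag
    refine (Finset.sum_congr rfl fun j _ => ?_).trans Finset.sum_comm
    rw [Matrix.mul_apply]
    refine Finset.sum_congr rfl fun i _ => ?_
    rw [Matrix.conjTranspose_apply, sq, star_trivial]
  rw [h1, hmul, h2]

lemma absm_congr {A B : Matrix n d ℝ} (h : Aᴴ * A = Bᴴ * B) : absm A = absm B :=
  absm_unique B (absm_posSemidef A)
    (by rw [pow_two, absm_mul_self A, h])

lemma absm_neg (A : Matrix n d ℝ) : absm (-A) = absm A :=
  absm_congr (by simp)

end MoreMatrix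

/-! ### tuple space machinery -/

section Tuple
variable {L : ℕ}

/-- The `ℓ²`-product model of the tuple space. -/
abbrev ET (m n : Fin L → ℕ) :=
  PiLp 2 (fun ℓ : Fin L => PiLp 2 (fun _ : Fin (m ℓ) => EuclideanSpace ℝ (Fin (n ℓ))))

variable {m n : Fin L → ℕ}

def toET (X : ∀ ℓ : Fin L, Matrix (Fin (m ℓ)) (Fin (n ℓ)) ℝ) : ET m n :=
  WithLp.toLp 2 (fun ℓ => WithLp.toLp 2 (fun i => WithLp.toLp 2 (X ℓ i)))

def ofET (X : ET m n) : ∀ ℓ : Fin L, Matrix (Fin (m ℓ)) (Fin (n ℓ)) ℝ :=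
  fun ℓ i j => ((X.ofLp ℓ).ofLp i).ofLp j

@[simp] lemma ofET_toET (X : ∀ ℓ : Fin L, Matrix (Fin (m ℓ)) (Fin (n ℓ)) ℝ) :
    ofET (toET X) = X := rfl

@[simp] lemma toET_ofET (X : ET m n) : toET (ofET X) = X := rfl

@[simp] lemma toET_add (X Y : ∀ ℓ : Fin L, Matrix (Fin (m ℓ)) (Fin (n ℓ)) ℝ) :
    toET (X + Y) = toET X + toET Y := rfl

@[simp] lemma toET_sub (X Y : ∀ ℓ : Fin L, Matrix (Fin (m ℓ)) (Fin (n ℓ)) ℝ) :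
    toET (X - Y) = toET X - toET Y := rfl

@[simp] lemma toET_smul (t : ℝ) (X : ∀ ℓ : Fin L, Matrix (Fin (m ℓ)) (Fin (n ℓ)) ℝ) :
    toET (t • X) = t • toET X := rfl

@[simp] lemma toET_neg (X : ∀ ℓ : Fin L, Matrix (Fin (m ℓ)) (Fin (n ℓ)) ℝ) :
    toET (-X) = -toET X := rfl

@[simp] lemma toET_zero : toET (0 : ∀ ℓ : Fin L, Matrix (Fin (m ℓ)) (Fin (n ℓ)) ℝ) = 0 := rfl

/-- `toET` as a linear equivalence. -/
noncomputable def eqET (m n : Fin L → ℕ) :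
    (∀ ℓ : Fin L, Matrix (Fin (m ℓ)) (Fin (n ℓ)) ℝ) ≃ₗ[ℝ] ET m n where
  toFun := toET
  invFun := ofET
  map_add' _ _ := rfl
  map_smul' _ _ := rfl
  left_inv _ := rfl
  right_inv _ := rfl

lemma fnorm_eq_norm (X : ∀ ℓ : Fin L, Matrix (Fin (m ℓ)) (Fin (n ℓ)) ℝ) :
    fnorm X = ‖toET X‖ := by
  rw [PiLp.norm_eq_of_L2]
  unfold fnorm
  congr 1
  refine Finset.sum_congr rfl fun ℓ _ => ?_
  rw [PiLp.norm_eq_of_L2, Real.sq_sqrt (by positivity)]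
  refine Finset.sum_congr rfl fun i _ => ?_
  rw [PiLp.norm_eq_of_L2, Real.sq_sqrt (by positivity)]
  refine Finset.sum_congr rfl fun j _ => ?_
  rw [Real.norm_eq_abs, sq_abs]
  rfl

lemma fnorm_nonneg (X : ∀ ℓ : Fin L, Matrix (Fin (m ℓ)) (Fin (n ℓ)) ℝ) : 0 ≤ fnorm X := by
  rw [fnorm_eq_norm]; exact norm_nonneg _

lemma fnorm_eq_zero_iff {X : ∀ ℓ : Fin L, Matrix (Fin (m ℓ)) (Fin (n ℓ)) ℝ} :
    fnorm X = 0 ↔ X = 0 := by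
  rw [fnorm_eq_norm, norm_eq_zero]
  exact ⟨fun h => by have := congrArg ofET h; exact this, fun h => by rw [h]; rfl⟩

lemma fnorm_pos {X : ∀ ℓ : Fin L, Matrix (Fin (m ℓ)) (Fin (n ℓ)) ℝ} (h : X ≠ 0) :
    0 < fnorm X :=
  lt_of_le_of_ne (fnorm_nonneg X) (fun h0 => h (fnorm_eq_zero_iff.mp h0.symm))

lemma fnorm_smul (t : ℝ) (X : ∀ ℓ : Fin L, Matrix (Fin (m ℓ)) (Fin (n ℓ)) ℝ) :
    fnorm (t • X) = |t| * fnorm X := by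
  rw [fnorm_eq_norm, toET_smul, norm_smul, Real.norm_eq_abs, fnorm_eq_norm]

lemma fnorm_neg (X : ∀ ℓ : Fin L, Matrix (Fin (m ℓ)) (Fin (n ℓ)) ℝ) :
    fnorm (-X) = fnorm X := by
  rw [fnorm_eq_norm, toET_neg, norm_neg, fnorm_eq_norm]

lemma fnorm_add_le (X Y : ∀ ℓ : Fin L, Matrix (Fin (m ℓ)) (Fin (n ℓ)) ℝ) :
    fnorm (X + Y) ≤ fnorm X + fnorm Y := by
  rw [fnorm_eq_norm, fnorm_eq_norm, fnorm_eq_norm, toET_add]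
  exact norm_add_le _ _

lemma fnorm_eq_sqrt_mnormsq (X : ∀ ℓ : Fin L, Matrix (Fin (m ℓ)) (Fin (n ℓ)) ℝ) :
    fnorm X = Real.sqrt (∑ ℓ, mnormsq (X ℓ)) := rfl

lemma fnorm_mul_le {a b c : Fin L → ℕ}
    (A : ∀ ℓ : Fin L, Matrix (Fin (a ℓ)) (Fin (b ℓ)) ℝ)
    (B : ∀ ℓ : Fin L, Matrix (Fin (b ℓ)) (Fin (c ℓ)) ℝ) :
    fnorm (fun ℓ => A ℓ * B ℓ) ≤ fnorm A * fnorm B := by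
  rw [fnorm_eq_sqrt_mnormsq, fnorm_eq_sqrt_mnormsq, fnorm_eq_sqrt_mnormsq,
    ← Real.sqrt_mul (Finset.sum_nonneg fun ℓ _ => mnormsq_nonneg _)]
  apply Real.sqrt_le_sqrt
  calc ∑ ℓ, mnormsq (A ℓ * B ℓ)
      ≤ ∑ ℓ, mnormsq (A ℓ) * mnormsq (B ℓ) :=
        Finset.sum_le_sum fun ℓ _ => mnormsq_mul_le _ _
    _ ≤ (∑ ℓ, mnormsq (A ℓ)) * (∑ ℓ, mnormsq (B ℓ)) := by
        rw [Finset.sum_mul]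
        refine Finset.sum_le_sum fun ℓ _ => ?_
        exact mul_le_mul_of_nonneg_left
          (Finset.single_le_sum (fun k _ => mnormsq_nonneg (B k)) (Finset.mem_univ ℓ))
          (mnormsq_nonneg (A ℓ))

lemma fnorm_le_sqrt_two_mul_of_mnormsq {m' n' : Fin L → ℕ}
    {X : ∀ ℓ : Fin L, Matrix (Fin (m ℓ)) (Fin (n ℓ)) ℝ}
    {Y : ∀ ℓ : Fin L, Matrix (Fin (m' ℓ)) (Fin (n' ℓ)) ℝ}
    (h : ∀ ℓ, mnormsq (X ℓ) ≤ 2 * mnormsq (Y ℓ)) :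
    fnorm X ≤ Real.sqrt 2 * fnorm Y := by
  rw [fnorm_eq_sqrt_mnormsq, fnorm_eq_sqrt_mnormsq, ← Real.sqrt_mul (by norm_num)]
  apply Real.sqrt_le_sqrt
  rw [Finset.mul_sum]
  exact Finset.sum_le_sum fun ℓ _ => h ℓ

end Tuple


section Main
variable {L : ℕ} {N R : Fin L → ℕ}

/-- The symmetrized product `uᵀv + vᵀu`. -/
def symProd (u v : V N R) : ∀ ℓ : Fin L, Matrix (Fin (R ℓ)) (Fin (R ℓ)) ℝ :=
  fun ℓ => (u ℓ)ᵀ * v ℓ + (v ℓ)ᵀ * u ℓ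

lemma symProd_smul (s t : ℝ) (u v : V N R) :
    symProd (s • u) (t • v) = (s * t) • symProd u v := by
  funext ℓ
  show ((s • u) ℓ)ᵀ * (t • v) ℓ + ((t • v) ℓ)ᵀ * (s • u) ℓ
      = (s * t) • ((u ℓ)ᵀ * v ℓ + (v ℓ)ᵀ * u ℓ)
  show (s • u ℓ)ᵀ * (t • v ℓ) + (t • v ℓ)ᵀ * (s • u ℓ) = _
  rw [Matrix.transpose_smul, Matrix.transpose_smul, Matrix.smul_mul, Matrix.smul_mul,
    Matrix.mul_smul, Matrix.mul_smul, smul_smul, smul_smul, mul_comm t s, ← smul_add]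

lemma symProd_zero_left (v : V N R) : symProd 0 v = 0 := by
  funext ℓ
  show ((0 : V N R) ℓ)ᵀ * v ℓ + (v ℓ)ᵀ * (0 : V N R) ℓ = 0
  simp

lemma symProd_zero_right (u : V N R) : symProd u 0 = 0 := by
  funext ℓ
  show (u ℓ)ᵀ * (0 : V N R) ℓ + ((0 : V N R) ℓ)ᵀ * u ℓ = 0
  simp

lemma symProd_sub_add (X Y : V N R) :
    symProd (X - Y) (X + Y) = (2 : ℝ) • (gram X - gram Y) := by
  funext ℓ
  show (X ℓ - Y ℓ)ᵀ * (X ℓ + Y ℓ) + (X ℓ + Y ℓ)ᵀ * (X ℓ - Y ℓ)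
      = (2 : ℝ) • ((X ℓ)ᵀ * X ℓ - (Y ℓ)ᵀ * Y ℓ)
  rw [Matrix.transpose_sub, Matrix.transpose_add, two_smul]
  simp only [Matrix.sub_mul, Matrix.add_mul, Matrix.mul_add, Matrix.mul_sub]
  abel

lemma gram_add_sub (u v : V N R) :
    gram (v + u) - gram (v - u) = (2 : ℝ) • symProd u v := by
  funext ℓ
  show (v ℓ + u ℓ)ᵀ * (v ℓ + u ℓ) - (v ℓ - u ℓ)ᵀ * (v ℓ - u ℓ)
      = (2 : ℝ) • ((u ℓ)ᵀ * v ℓ + (v ℓ)ᵀ * u ℓ)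
  rw [Matrix.transpose_sub, Matrix.transpose_add, two_smul]
  simp only [Matrix.sub_mul, Matrix.add_mul, Matrix.mul_add, Matrix.mul_sub]
  abel

lemma sqrtGram_apply (X : V N R) (ℓ : Fin L) : sqrtGram X ℓ = absm (X ℓ) := rfl

lemma fnorm_sqrtGram (X : V N R) : fnorm (sqrtGram X) = fnorm X := by
  rw [fnorm_eq_sqrt_mnormsq, fnorm_eq_sqrt_mnormsq]
  congr 1
  exact Finset.sum_congr rfl fun ℓ _ => mnormsq_absm (X ℓ)

lemma sqrtGram_neg (X : V N R) : sqrtGram (-X) = sqrtGram X := by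
  funext ℓ
  show absm ((-X) ℓ) = absm (X ℓ)
  show absm (-(X ℓ)) = absm (X ℓ)
  exact absm_neg (X ℓ)

lemma sqrtGram_sq (X : V N R) (ℓ : Fin L) :
    sqrtGram X ℓ * sqrtGram X ℓ = gram X ℓ := by
  show absm (X ℓ) * absm (X ℓ) = (X ℓ)ᵀ * X ℓ
  rw [← real_conjTranspose]
  exact absm_mul_self (X ℓ)

lemma fnorm_sqrtGram_sub_le (X Y : V N R) :
    fnorm (sqrtGram X - sqrtGram Y) ≤ Real.sqrt 2 * fnorm (X - Y) := by
  have h : ∀ ℓ, mnormsq ((sqrtGram X - sqrtGram Y) ℓ) ≤ 2 * mnormsq ((X - Y) ℓ) :=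
    fun ℓ => absm_sub_mnormsq_le (X ℓ) (Y ℓ)
  exact fnorm_le_sqrt_two_mul_of_mnormsq h

lemma exists_act_of_gram_eq (X Y : V N R) (h : gram X = gram Y) :
    ∃ Q : HGroup N, act Q X = Y := by
  have hl : ∀ ℓ : Fin L, ∃ Qm : Matrix (Fin (N ℓ)) (Fin (N ℓ)) ℝ,
      Qm ∈ Matrix.orthogonalGroup (Fin (N ℓ)) ℝ ∧ Qm * X ℓ = Y ℓ := by
    intro ℓ
    apply exists_orthogonal_of_gram_eq
    have h2 : (X ℓ)ᵀ * X ℓ = (Y ℓ)ᵀ * Y ℓ := congrFun h ℓ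
    rw [real_conjTranspose, real_conjTranspose]
    exact h2
  choose Qm hmem hmul using hl
  exact ⟨fun ℓ => ⟨Qm ℓ, hmem ℓ⟩, funext fun ℓ => hmul ℓ⟩

lemma continuous_entry {m n : Fin L → ℕ} (ℓ : Fin L) (i : Fin (m ℓ)) (j : Fin (n ℓ)) :
    Continuous fun x : ET m n => ofET x ℓ i j := by
  unfold ofET
  fun_prop

lemma continuous_FF :
    Continuous fun p : ET N R × ET N R => fnorm (symProd (ofET p.1) (ofET p.2)) := by
  show Continuous fun p : ET N R × ET N R =>
    Real.sqrt (∑ ℓ, ∑ i, ∑ j, (symProd (ofET p.1) (ofET p.2) ℓ i j) ^ 2)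
  refine Real.continuous_sqrt.comp ?_
  refine continuous_finset_sum _ fun ℓ _ => continuous_finset_sum _ fun i _ =>
    continuous_finset_sum _ fun j _ => ?_
  have hent : (fun p : ET N R × ET N R => (symProd (ofET p.1) (ofET p.2) ℓ i j))
      = fun p => (∑ k, ofET p.1 ℓ k i * ofET p.2 ℓ k j)
        + (∑ k, ofET p.2 ℓ k i * ofET p.1 ℓ k j) := rfl
  show Continuous fun p : ET N R × ET N R => (symProd (ofET p.1) (ofET p.2) ℓ i j) ^ 2
  rw [show (fun p : ET N R × ET N R => (symProd (ofET p.1) (ofET p.2) ℓ i j) ^ 2)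
      = fun p => ((∑ k, ofET p.1 ℓ k i * ofET p.2 ℓ k j)
        + (∑ k, ofET p.2 ℓ k i * ofET p.1 ℓ k j)) ^ 2 from rfl]
  apply Continuous.pow
  apply Continuous.add
  · exact continuous_finset_sum _ fun k _ =>
      ((continuous_entry ℓ k i).comp continuous_fst).mul
        ((continuous_entry ℓ k j).comp continuous_snd)
  · exact continuous_finset_sum _ fun k _ =>
      ((continuous_entry ℓ k i).comp continuous_snd).mul
        ((continuous_entry ℓ k j).comp continuous_fst)

/-- On a subspace where degenerate symmetrized products force a zero factor, the
symmetrized product is uniformly bounded below. -/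
lemma exists_c (T : Submodule ℝ (V N R))
    (hT : ∀ u v : V N R, u ∈ T → v ∈ T → symProd u v = 0 → u = 0 ∨ v = 0) :
    ∃ c : ℝ, 0 < c ∧ ∀ u ∈ T, ∀ v ∈ T,
      c * (fnorm u * fnorm v) ≤ fnorm (symProd u v) := by
  classical
  set TE : Submodule ℝ (ET N R) := T.map (eqET N R).toLinearMap with hTE
  set F : ET N R × ET N R → ℝ := fun p => fnorm (symProd (ofET p.1) (ofET p.2)) with hF
  have hFc : Continuous F := continuous_FF
  set K : Set (ET N R × ET N R) :=
    (Prod.fst ⁻¹' (TE : Set (ET N R))) ∩ ((Prod.snd ⁻¹' (TE : Set (ET N R))) ∩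
      ({p | ‖p.1‖ = 1} ∩ {p | ‖p.2‖ = 1})) with hK
  have hmemTE : ∀ (w : V N R), w ∈ T → toET w ∈ TE := fun w hw =>
    Submodule.mem_map.mpr ⟨w, hw, rfl⟩
  have hofTE : ∀ x : ET N R, x ∈ TE → ofET x ∈ T := by
    intro x hx
    obtain ⟨w, hw, hwe⟩ := Submodule.mem_map.mp hx
    have : ofET ((eqET N R).toLinearMap w) = w := rfl
    rw [← hwe, this]
    exact hw
  have hnorm1 : ∀ (w : V N R), w ≠ 0 → ‖toET ((fnorm w)⁻¹ • w)‖ = 1 := by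
    intro w hw
    rw [← fnorm_eq_norm, fnorm_smul, abs_of_pos (inv_pos.mpr (fnorm_pos hw)),
      inv_mul_cancel₀ (ne_of_gt (fnorm_pos hw))]
  have hKc : IsClosed K := by
    have h1 : IsClosed (TE : Set (ET N R)) := Submodule.closed_of_finiteDimensional TE
    exact (h1.preimage continuous_fst).inter ((h1.preimage continuous_snd).inter
      ((isClosed_eq (continuous_norm.comp continuous_fst) continuous_const).inter
        (isClosed_eq (continuous_norm.comp continuous_snd) continuous_const)))
  have hKb : Bornology.IsBounded K := by
    apply Bornology.IsBounded.subset
      (Metric.isBounded_closedBall (x := (0 : ET N R × ET N R)) (r := 2))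
    rintro p ⟨-, -, h1, h2⟩
    rw [Metric.mem_closedBall, dist_zero_right, Prod.norm_def]
    rw [Set.mem_setOf_eq] at h1 h2
    rw [h1, h2]
    norm_num
  have hKcomp := Metric.isCompact_of_isClosed_isBounded hKc hKb
  rcases K.eq_empty_or_nonempty with hKe | hKne
  · -- T is trivial
    have hz : ∀ w ∈ T, w = (0 : V N R) := by
      intro w hw
      by_contra hw0
      have hmem : (toET ((fnorm w)⁻¹ • w), toET ((fnorm w)⁻¹ • w)) ∈ K := by
        refine ⟨hmemTE _ (T.smul_mem _ hw), hmemTE _ (T.smul_mem _ hw), ?_, ?_⟩ <;>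
          exact hnorm1 w hw0
      rw [hKe] at hmem
      exact hmem
    refine ⟨1, one_pos, fun u hu v hv => ?_⟩
    rw [hz u hu, symProd_zero_left,
      show fnorm (0 : V N R) = 0 from fnorm_eq_zero_iff.mpr rfl]
    simpa using fnorm_nonneg (0 : ∀ ℓ : Fin L, Matrix (Fin (R ℓ)) (Fin (R ℓ)) ℝ)
  · obtain ⟨p0, hp0K, hp0min⟩ := hKcomp.exists_isMinOn hKne hFc.continuousOn
    have hcpos : 0 < F p0 := by
      rcases lt_or_eq_of_le (fnorm_nonneg (symProd (ofET p0.1) (ofET p0.2))) with h | h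
      · exact h
      · exfalso
        obtain ⟨h1, h2, hn1, hn2⟩ := hp0K
        have hsp : symProd (ofET p0.1) (ofET p0.2) = 0 := fnorm_eq_zero_iff.mp h.symm
        rcases hT _ _ (hofTE _ h1) (hofTE _ h2) hsp with h0 | h0
        · have : p0.1 = 0 := by
            have := congrArg toET h0
            rwa [toET_ofET, toET_zero] at this
          rw [Set.mem_setOf_eq, this, norm_zero] at hn1
          norm_num at hn1
        · have : p0.2 = 0 := by
            have := congrArg toET h0
            rwa [toET_ofET, toET_zero] at this
          rw [Set.mem_setOf_eq, this, norm_zero] at hn2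
          norm_num at hn2
    refine ⟨F p0, hcpos, fun u hu v hv => ?_⟩
    by_cases hu0 : u = 0
    · rw [hu0, symProd_zero_left,
        show fnorm (0 : V N R) = 0 from fnorm_eq_zero_iff.mpr rfl]
      simpa using fnorm_nonneg (0 : ∀ ℓ : Fin L, Matrix (Fin (R ℓ)) (Fin (R ℓ)) ℝ)
    by_cases hv0 : v = 0
    · rw [hv0, symProd_zero_right,
        show fnorm (0 : V N R) = 0 from fnorm_eq_zero_iff.mpr rfl]
      simpa using fnorm_nonneg (0 : ∀ ℓ : Fin L, Matrix (Fin (R ℓ)) (Fin (R ℓ)) ℝ)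
    have ha : 0 < fnorm u := fnorm_pos hu0
    have hb : 0 < fnorm v := fnorm_pos hv0
    have hmem : (toET ((fnorm u)⁻¹ • u), toET ((fnorm v)⁻¹ • v)) ∈ K :=
      ⟨hmemTE _ (T.smul_mem _ hu), hmemTE _ (T.smul_mem _ hv), hnorm1 u hu0, hnorm1 v hv0⟩
    have hge := hp0min hmem
    have hFval : F (toET ((fnorm u)⁻¹ • u), toET ((fnorm v)⁻¹ • v))
        = (fnorm u)⁻¹ * (fnorm v)⁻¹ * fnorm (symProd u v) := by
      show fnorm (symProd (ofET (toET ((fnorm u)⁻¹ • u))) (ofET (toET ((fnorm v)⁻¹ • v)))) = _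
      rw [ofET_toET, ofET_toET, symProd_smul, fnorm_smul, abs_of_pos
        (mul_pos (inv_pos.mpr ha) (inv_pos.mpr hb))]
    have hge2 : F p0 ≤ (fnorm u)⁻¹ * (fnorm v)⁻¹ * fnorm (symProd u v) := by
      have h4 : F p0 ≤ F (toET ((fnorm u)⁻¹ • u), toET ((fnorm v)⁻¹ • v)) := hge
      rwa [hFval] at h4
    have h3 := mul_le_mul_of_nonneg_right hge2 (le_of_lt (mul_pos ha hb))
    calc F p0 * (fnorm u * fnorm v) ≤ (fnorm u)⁻¹ * (fnorm v)⁻¹ * fnorm (symProd u v)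
          * (fnorm u * fnorm v) := h3
      _ = fnorm (symProd u v) := by field_simp

end Main

end MatrixLemmas

/-- If `M` is a finite union of linear subspaces `W i` and
`∪_{i,j} (W i + W j)` is transverse to the orbits of `H`, then the second moment is
bi-Lipschitz on `M`. -/
theorem secondMoment_biLipschitz_of_subspace_union
    (L : ℕ) (hL : 0 < L) (N R : Fin L → ℕ) (hN : ∀ ℓ, 0 < N ℓ) (hR : ∀ ℓ, 0 < R ℓ)
    (m : ℕ) (W : Fin m → Submodule ℝ (V N R))
    (M : Set (V N R)) (hM : M = ⋃ i, (W i : Set (V N R)))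
    (htrans : Transverse (⋃ i, ⋃ j, ((W i ⊔ W j : Submodule ℝ (V N R)) : Set (V N R)))) :
    ∃ C₁ C₂ : ℝ, 0 < C₁ ∧ C₁ ≤ C₂ ∧ ∀ X ∈ M, ∀ Y ∈ M,
      C₁ * dSigma X Y ≤ fnorm (sqrtGram X - sqrtGram Y) ∧
      fnorm (sqrtGram X - sqrtGram Y) ≤ C₂ * dSigma X Y := by
  classical
  rcases Nat.eq_zero_or_pos m with hm | hm
  · subst hm
    refine ⟨1, 1, one_pos, le_refl 1, fun X hX Y hY => ?_⟩
    exfalso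
    rw [hM] at hX
    simpa using hX
  have key : ∀ p : Fin m × Fin m, ∃ c : ℝ, 0 < c ∧
      ∀ u ∈ (W p.1 ⊔ W p.2), ∀ v ∈ (W p.1 ⊔ W p.2),
        c * (fnorm u * fnorm v) ≤ fnorm (symProd u v) := by
    intro p
    apply exists_c
    intro u v hu hv hsym
    have hg : gram (v + u) = gram (v - u) := by
      have h2 := gram_add_sub u v
      rw [hsym, smul_zero] at h2
      exact sub_eq_zero.mp h2
    obtain ⟨Q, hQ⟩ := exists_act_of_gram_eq (v + u) (v - u) hg
    have hS : ∀ w : V N R, w ∈ W p.1 ⊔ W p.2 →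
        w ∈ (⋃ i, ⋃ j, ((W i ⊔ W j : Submodule ℝ (V N R)) : Set (V N R))) := by
      intro w hw
      exact Set.mem_iUnion.mpr ⟨p.1, Set.mem_iUnion.mpr ⟨p.2, hw⟩⟩
    have h3 := htrans (v + u) (hS _ (Submodule.add_mem _ hv hu)) Q
      (by rw [hQ]; exact hS _ (Submodule.sub_mem _ hv hu))
    rw [hQ] at h3
    rcases h3 with h4 | h4
    · left
      have h5 : u + u = 0 := by
        calc u + u = (v + u) - (v - u) := by abel
          _ = (v - u) - (v - u) := by rw [h4]
          _ = 0 := sub_self _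
      rw [← two_smul ℝ u] at h5
      rcases smul_eq_zero.mp h5 with h6 | h6
      · norm_num at h6
      · exact h6
    · right
      have h5 : v + v = 0 := by
        calc v + v = (v - u) + (v + u) := by abel
          _ = -(v + u) + (v + u) := by rw [h4]
          _ = 0 := by abel
      rw [← two_smul ℝ v] at h5
      rcases smul_eq_zero.mp h5 with h6 | h6
      · norm_num at h6
      · exact h6
  choose cf hcf using key
  have hne : (Finset.univ : Finset (Fin m × Fin m)).Nonempty :=
    ⟨(⟨0, hm⟩, ⟨0, hm⟩), Finset.mem_univ _⟩
  set c := Finset.univ.inf' hne cf with hc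
  have hcpos : 0 < c := by
    rw [hc, Finset.lt_inf'_iff]
    exact fun p _ => (hcf p).1
  set s2 := Real.sqrt 2 with hs2
  have hs2pos : 0 < s2 := Real.sqrt_pos.mpr (by norm_num)
  refine ⟨min (c / 4) s2, s2, lt_min (by linarith) hs2pos, min_le_right _ _, ?_⟩
  intro X hX Y hY
  rw [hM] at hX hY
  obtain ⟨i, hXi⟩ := Set.mem_iUnion.mp hX
  obtain ⟨j, hYj⟩ := Set.mem_iUnion.mp hY
  have hd : dSigma X Y = min (fnorm (X - Y)) (fnorm (X + Y)) := rfl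
  set f := fnorm (sqrtGram X - sqrtGram Y) with hf
  have hub1 : f ≤ s2 * fnorm (X - Y) := fnorm_sqrtGram_sub_le X Y
  have hub2 : f ≤ s2 * fnorm (X + Y) := by
    have h1 : sqrtGram Y = sqrtGram (-Y) := (sqrtGram_neg Y).symm
    have h2 : X - (-Y) = X + Y := by abel
    calc f = fnorm (sqrtGram X - sqrtGram (-Y)) := by rw [hf, h1]
      _ ≤ s2 * fnorm (X - (-Y)) := fnorm_sqrtGram_sub_le X (-Y)
      _ = s2 * fnorm (X + Y) := by rw [h2]
  have hupper : f ≤ s2 * dSigma X Y := by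
    rw [hd]
    rcases le_total (fnorm (X - Y)) (fnorm (X + Y)) with h | h
    · rw [min_eq_left h]; exact hub1
    · rw [min_eq_right h]; exact hub2
  have hdnn : 0 ≤ dSigma X Y := by
    rw [hd]; exact le_min (fnorm_nonneg _) (fnorm_nonneg _)
  refine ⟨?_, hupper⟩
  -- lower bound
  have hiu : X - Y ∈ W i ⊔ W j :=
    Submodule.sub_mem _ (Submodule.mem_sup_left hXi) (Submodule.mem_sup_right hYj)
  have hiv : X + Y ∈ W i ⊔ W j :=
    Submodule.add_mem _ (Submodule.mem_sup_left hXi) (Submodule.mem_sup_right hYj)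
  have hkey := (hcf (i, j)).2 (X - Y) hiu (X + Y) hiv
  have hcle : c ≤ cf (i, j) := Finset.inf'_le _ (Finset.mem_univ _)
  have hgram_decomp : gram X - gram Y
      = (fun ℓ => sqrtGram X ℓ * (sqrtGram X - sqrtGram Y) ℓ)
        + (fun ℓ => (sqrtGram X - sqrtGram Y) ℓ * sqrtGram Y ℓ) := by
    funext ℓ
    show gram X ℓ - gram Y ℓ = sqrtGram X ℓ * (sqrtGram X ℓ - sqrtGram Y ℓ)
      + (sqrtGram X ℓ - sqrtGram Y ℓ) * sqrtGram Y ℓ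
    rw [← sqrtGram_sq X ℓ, ← sqrtGram_sq Y ℓ]
    noncomm_ring
  have h1 : fnorm (gram X - gram Y) ≤ f * (fnorm X + fnorm Y) := by
    rw [hgram_decomp]
    calc fnorm ((fun ℓ => sqrtGram X ℓ * (sqrtGram X - sqrtGram Y) ℓ)
          + (fun ℓ => (sqrtGram X - sqrtGram Y) ℓ * sqrtGram Y ℓ))
        ≤ fnorm (fun ℓ => sqrtGram X ℓ * (sqrtGram X - sqrtGram Y) ℓ)
          + fnorm (fun ℓ => (sqrtGram X - sqrtGram Y) ℓ * sqrtGram Y ℓ) := fnorm_add_le _ _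
      _ ≤ fnorm (sqrtGram X) * f + f * fnorm (sqrtGram Y) :=
          add_le_add (fnorm_mul_le _ _) (fnorm_mul_le _ _)
      _ = f * (fnorm X + fnorm Y) := by rw [fnorm_sqrtGram, fnorm_sqrtGram]; ring
  have hsymid : fnorm (symProd (X - Y) (X + Y)) = 2 * fnorm (gram X - gram Y) := by
    rw [symProd_sub_add, fnorm_smul]
    norm_num
  have h2 : (c / 2) * (fnorm (X - Y) * fnorm (X + Y)) ≤ fnorm (gram X - gram Y) := by
    have h3 : c * (fnorm (X - Y) * fnorm (X + Y)) ≤ fnorm (symProd (X - Y) (X + Y)) := by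
      refine le_trans ?_ hkey
      exact mul_le_mul_of_nonneg_right hcle (mul_nonneg (fnorm_nonneg _) (fnorm_nonneg _))
    rw [hsymid] at h3
    linarith
  have hXle : 2 * fnorm X ≤ fnorm (X - Y) + fnorm (X + Y) := by
    have h5 : fnorm ((X - Y) + (X + Y)) ≤ fnorm (X - Y) + fnorm (X + Y) := fnorm_add_le _ _
    have h6 : (X - Y) + (X + Y) = (2:ℝ) • X := by
      rw [two_smul]; abel
    rw [h6, fnorm_smul, abs_of_pos (by norm_num : (0:ℝ) < 2)] at h5
    exact h5
  have hYle : 2 * fnorm Y ≤ fnorm (X - Y) + fnorm (X + Y) := by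
    have h5 : fnorm ((X + Y) + (-(X - Y))) ≤ fnorm (X + Y) + fnorm (-(X - Y)) :=
      fnorm_add_le _ _
    rw [fnorm_neg] at h5
    have h6 : (X + Y) + (-(X - Y)) = (2:ℝ) • Y := by
      rw [two_smul]; abel
    rw [h6, fnorm_smul, abs_of_pos (by norm_num : (0:ℝ) < 2)] at h5
    linarith
  have h4 : dSigma X Y * (fnorm X + fnorm Y) ≤ 2 * (fnorm (X - Y) * fnorm (X + Y)) := by
    have hann : 0 ≤ fnorm (X - Y) := fnorm_nonneg _
    have hbnn : 0 ≤ fnorm (X + Y) := fnorm_nonneg _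
    rw [hd]
    rcases le_total (fnorm (X - Y)) (fnorm (X + Y)) with h | h
    · rw [min_eq_left h]
      nlinarith [hXle, hYle]
    · rw [min_eq_right h]
      nlinarith [hXle, hYle]
  by_cases hXY0 : fnorm X + fnorm Y = 0
  · have hXz : fnorm X = 0 := by
      have := fnorm_nonneg X; have := fnorm_nonneg Y; linarith
    have hYz : fnorm Y = 0 := by
      have := fnorm_nonneg X; have := fnorm_nonneg Y; linarith
    have hX0 : X = 0 := fnorm_eq_zero_iff.mp hXz
    have hY0 : Y = 0 := fnorm_eq_zero_iff.mp hYz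
    have hzero : dSigma X Y = 0 := by
      rw [hd, hX0, hY0, sub_self, add_zero, min_self]
      exact fnorm_eq_zero_iff.mpr rfl
    rw [hzero, mul_zero]
    exact fnorm_nonneg _
  · have hpos : 0 < fnorm X + fnorm Y :=
      lt_of_le_of_ne (add_nonneg (fnorm_nonneg X) (fnorm_nonneg Y)) (Ne.symm hXY0)
    have s1 := mul_le_mul_of_nonneg_left h4 (by linarith : (0:ℝ) ≤ c / 4)
    have hchain : ((c / 4) * dSigma X Y) * (fnorm X + fnorm Y) ≤ f * (fnorm X + fnorm Y) := by
      nlinarith [s1, h2, h1]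
    have h7 : (c / 4) * dSigma X Y ≤ f := le_of_mul_le_mul_right hchain hpos
    calc min (c / 4) s2 * dSigma X Y
        ≤ (c / 4) * dSigma X Y := mul_le_mul_of_nonneg_right (min_le_left _ _) hdnn
      _ ≤ f := h7

end GPR
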